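/- arXiv:dg-ga/9710029 — 6 statements merged into one kernel-verified Lean document; each statement's English description precedes it below -/
import Mathlib

section
/- Define polynomials R_r^1, R_r^2, R_r^3 in ℂ[α,β,γ] by R_0^1 = 1, R_0^2 = 0, R_0^3 = 0, and for r ≥ 0: R_{r+1}^1 = α·R_r^1 + r²·R_r^2, R_{r+1}^2 = (β + (−1)^{r+1}·8)·R_r^1 + (2r/(r+1))·R_r^3, R_{r+1}^3 = γ·R_r^1. Let J_g be the ideal (R_g^1, R_g^2, R_g^3). Then for all g ≥ 1, γ·J_g ⊆ J_{g+1}. -/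
open MvPolynomial

noncomputable section

abbrev R3 : Type := MvPolynomial (Fin 3) ℂ

def al : R3 := X 0
def be : R3 := X 1
def ga : R3 := X 2

def Rrel : ℕ → R3 × R3 × R3
  | 0 => (1, 0, 0)
  | (r + 1) =>
    let p := Rrel r
    (al * p.1 + (r : R3) ^ 2 * p.2.1,
     (be + (-1) ^ (r + 1) * 8) * p.1 + C ((2 * (r : ℂ)) / ((r : ℂ) + 1)) * p.2.2,
     ga * p.1)

def J (g : ℕ) : Ideal R3 := Ideal.span {(Rrel g).1, (Rrel g).2.1, (Rrel g).2.2}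

theorem stmt2 (g : ℕ) (hg : 1 ≤ g) : ∀ x ∈ J g, ga * x ∈ J (g + 1) := by
  have hA : (Rrel (g+1)).1 = al * (Rrel g).1 + (g : R3) ^ 2 * (Rrel g).2.1 := rfl
  have hB : (Rrel (g+1)).2.1
      = (be + (-1) ^ (g + 1) * 8) * (Rrel g).1
        + C ((2 * (g : ℂ)) / ((g : ℂ) + 1)) * (Rrel g).2.2 := rfl
  have hC : (Rrel (g+1)).2.2 = ga * (Rrel g).1 := rfl
  have hgC : ((g : ℂ)) ≠ 0 := Nat.cast_ne_zero.mpr (by omega)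
  have hg2 : ((g : ℂ))^2 ≠ 0 := pow_ne_zero _ hgC
  have hcne : (2 * (g : ℂ)) / ((g : ℂ) + 1) ≠ 0 := by
    have hgp1 : ((g : ℂ) + 1) ≠ 0 := by
      have := Nat.cast_ne_zero (R := ℂ).mpr (Nat.succ_ne_zero g)
      push_cast at this
      exact this
    exact div_ne_zero (by simpa using hgC) hgp1
  have hcast : (g : R3) = C ((g : ℂ)) := (map_natCast C g).symm
  have h1 : C (((g:ℂ)^2)⁻¹) * (g : R3)^2 = 1 := by
    rw [hcast, ← C_pow, ← C_mul, inv_mul_cancel₀ hg2, C_1]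
  have h2 : (C (((2 * (g : ℂ)) / ((g : ℂ) + 1))⁻¹) : R3) * C ((2 * (g : ℂ)) / ((g : ℂ) + 1)) = 1 := by
    rw [← C_mul, inv_mul_cancel₀ hcne, C_1]
  -- memberships of generators of J (g+1)
  have mA : (Rrel (g+1)).1 ∈ J (g+1) := Ideal.subset_span (by simp)
  have mB : (Rrel (g+1)).2.1 ∈ J (g+1) := Ideal.subset_span (by simp)
  have mC : (Rrel (g+1)).2.2 ∈ J (g+1) := Ideal.subset_span (by simp)
  have m1 : ga * (Rrel g).1 ∈ J (g+1) := hC ▸ mC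
  have m2 : ga * (Rrel g).2.1 ∈ J (g+1) := by
    have key : ga * (Rrel g).2.1
        = C (((g:ℂ)^2)⁻¹) * (ga * (Rrel (g+1)).1 - al * (Rrel (g+1)).2.2) := by
      rw [hA, hC]
      linear_combination (-(ga * (Rrel g).2.1)) * h1
    rw [key]
    exact Ideal.mul_mem_left _ _ (Ideal.sub_mem _ (Ideal.mul_mem_left _ _ mA)
      (Ideal.mul_mem_left _ _ mC))
  have m3 : ga * (Rrel g).2.2 ∈ J (g+1) := by
    have key : ga * (Rrel g).2.2
        = C (((2 * (g : ℂ)) / ((g : ℂ) + 1))⁻¹)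
          * (ga * (Rrel (g+1)).2.1 - (be + (-1) ^ (g + 1) * 8) * (Rrel (g+1)).2.2) := by
      rw [hB, hC]
      linear_combination (-(ga * (Rrel g).2.2)) * h2
    rw [key]
    exact Ideal.mul_mem_left _ _ (Ideal.sub_mem _ (Ideal.mul_mem_left _ _ mB)
      (Ideal.mul_mem_left _ _ mC))
  intro x hx
  have hle : J g ≤ Submodule.comap (LinearMap.mulLeft R3 ga) (J (g+1)) := by
    rw [J, Ideal.span_le]
    intro y hy
    simp only [Set.mem_insert_iff, Set.mem_singleton_iff] at hy
    rcases hy with rfl | rfl | rfl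
    · simpa using m1
    · simpa using m2
    · simpa using m3
  simpa using hle hx
end
end

section
/- With the relations R_r^i defined recursively as above (R_0^1 = 1, R_0^2 = 0, R_0^3 = 0; R_{r+1}^1 = α·R_r^1 + r²·R_r^2, R_{r+1}^2 = (β + (−1)^{r+1}·8)·R_r^1 + (2r/(r+1))·R_r^3, R_{r+1}^3 = γ·R_r^1), one has γ^g ∈ J_g for every g ≥ 1, where J_g = (R_g^1, R_g^2, R_g^3). Consequently γ is nilpotent in the quotient ring ℂ[α,β,γ]/J_g. -/
open MvPolynomial

noncomputable section

lemma cancelC {g : ℕ} {c : ℂ} (hc : c ≠ 0) {x : R3} (h : C c * x ∈ J g) : x ∈ J g := by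
  have h2 := Ideal.mul_mem_left (J g) (C c⁻¹) h
  rwa [← mul_assoc, ← C_mul, inv_mul_cancel₀ hc, C_1, one_mul] at h2

lemma key (g : ℕ) : ∀ k, k ≤ g →
    ga ^ k * (Rrel (g - k)).1 ∈ J g ∧
    ga ^ k * (Rrel (g - k)).2.1 ∈ J g ∧
    ga ^ k * (Rrel (g - k)).2.2 ∈ J g := by
  intro k
  induction k with
  | zero =>
      intro _
      simp only [Nat.sub_zero, pow_zero, one_mul]
      refine ⟨?_, ?_, ?_⟩ <;> apply Ideal.subset_span <;> simp
  | succ k ih =>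
      intro hk
      obtain ⟨h1, h2, h3⟩ := ih (Nat.le_of_succ_le hk)
      set r := g - (k + 1) with hrdef
      have hr1 : g - k = r + 1 := by omega
      rw [hr1] at h1 h2 h3
      -- Claim A
      have hA : ga ^ (k + 1) * (Rrel r).1 ∈ J g := by
        have heq : ga ^ (k + 1) * (Rrel r).1 = ga ^ k * (Rrel (r + 1)).2.2 := by
          show _ = ga ^ k * (ga * (Rrel r).1)
          ring
        rw [heq]; exact h3
      refine ⟨hA, ?_, ?_⟩
      · -- Claim B : ga^(k+1) * (Rrel r).2.1 ∈ J g
        rcases Nat.eq_zero_or_pos r with h0 | hpos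
        · rw [h0]; show ga ^ (k+1) * (0 : R3) ∈ J g
          simp
        · have hrc : ((r : ℂ)) ≠ 0 := Nat.cast_ne_zero.2 (Nat.pos_iff_ne_zero.mp hpos)
          apply cancelC (c := (r : ℂ) ^ 2) (pow_ne_zero 2 hrc)
          have heq : C ((r:ℂ)^2) * (ga ^ (k + 1) * (Rrel r).2.1)
              = ga * (ga ^ k * (Rrel (r+1)).1) - al * (ga ^ (k+1) * (Rrel r).1) := by
            show _ = ga * (ga ^ k * (al * (Rrel r).1 + (r : R3) ^ 2 * (Rrel r).2.1)) - _
            have : ((r : R3)) = C ((r : ℂ)) := by simp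
            rw [this]
            rw [map_pow]
            ring
          rw [heq]
          exact Ideal.sub_mem _ (Ideal.mul_mem_left _ _ h1) (Ideal.mul_mem_left _ _ hA)
      · -- Claim C : ga^(k+1) * (Rrel r).2.2 ∈ J g
        rcases Nat.eq_zero_or_pos r with h0 | hpos
        · rw [h0]; show ga ^ (k+1) * (0 : R3) ∈ J g
          simp
        · have hrc : ((r : ℂ)) ≠ 0 := Nat.cast_ne_zero.2 (Nat.pos_iff_ne_zero.mp hpos)
          have hr1c : ((r : ℂ) + 1) ≠ 0 := by
            have : ((r : ℂ) + 1) = ((r + 1 : ℕ) : ℂ) := by push_cast; ring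
            rw [this]
            exact Nat.cast_ne_zero.2 (Nat.succ_ne_zero r)
          have hcne : (2 * (r : ℂ)) / ((r : ℂ) + 1) ≠ 0 :=
            div_ne_zero (mul_ne_zero two_ne_zero hrc) hr1c
          apply cancelC hcne
          have heq : C ((2 * (r:ℂ)) / ((r:ℂ) + 1)) * (ga ^ (k + 1) * (Rrel r).2.2)
              = ga * (ga ^ k * (Rrel (r+1)).2.1)
                - (be + (-1) ^ (r + 1) * 8) * (ga ^ (k+1) * (Rrel r).1) := by
            show _ = ga * (ga ^ k * ((be + (-1) ^ (r + 1) * 8) * (Rrel r).1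
                + C ((2 * (r : ℂ)) / ((r : ℂ) + 1)) * (Rrel r).2.2)) - _
            ring
          rw [heq]
          exact Ideal.sub_mem _ (Ideal.mul_mem_left _ _ h2) (Ideal.mul_mem_left _ _ hA)

theorem stmt4 (g : ℕ) (hg : 1 ≤ g) :
    ga ^ g ∈ J g ∧ IsNilpotent (Ideal.Quotient.mk (J g) ga) := by
  have hmem : ga ^ g ∈ J g := by
    have h := (key g g le_rfl).1
    simpa [Rrel] using h
  exact ⟨hmem, g, by rw [← map_pow]; exact Ideal.Quotient.eq_zero_iff_mem.2 hmem⟩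
end
end

section
/- Let ẑ_r ∈ ℂ[α] be defined by ẑ_0 = 1, ẑ_1 = α, ẑ_{r+1} = α·ẑ_r + r²·(8 + (−1)^r·8)·ẑ_{r−1}. Then the set of common roots in ℂ of ẑ_g and ẑ_{g+1} is exactly {0} ∪ {±8k·√−1 : 1 ≤ k ≤ ⌊(g−1)/2⌋}. -/
open Polynomial

noncomputable section

def zhat : ℕ → Polynomial ℂ
  | 0 => 1
  | 1 => Polynomial.X
  | (r + 2) => Polynomial.X * zhat (r + 1)
      + ((r : Polynomial ℂ) + 1) ^ 2 * (8 + (-1) ^ (r + 1) * 8) * zhat r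

lemma zhat_even (m : ℕ) : zhat (2 * m + 2) = Polynomial.X * zhat (2 * m + 1) := by
  rw [show 2 * m + 2 = (2 * m) + 2 from rfl, zhat]
  have h : ((-1 : Polynomial ℂ)) ^ (2 * m + 1) = -1 := Odd.neg_one_pow ⟨m, by ring⟩
  rw [h]; ring

lemma root_odd (m : ℕ) (z : ℂ) : (zhat (2 * m + 1)).eval z = 0 ↔
    z = 0 ∨ ∃ k : ℕ, 1 ≤ k ∧ k ≤ m ∧
      (z = 8 * (k : ℂ) * Complex.I ∨ z = -(8 * (k : ℂ) * Complex.I)) := by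
  induction m with
  | zero =>
    simp only [Nat.mul_zero, Nat.zero_add, zhat, eval_X]
    constructor
    · exact fun h => Or.inl h
    · rintro (h | ⟨k, hk1, hk2, _⟩)
      · exact h
      · omega
  | succ m ih =>
    have hrec : zhat (2 * (m + 1) + 1) =
        (Polynomial.X ^ 2 + ((m : Polynomial ℂ) + 1) ^ 2 * 64) * zhat (2 * m + 1) := by
      rw [show 2 * (m + 1) + 1 = (2 * m + 1) + 2 from by ring, zhat,
        show (2 * m + 1) + 1 = 2 * m + 2 from rfl, zhat_even]
      have h : ((-1 : Polynomial ℂ)) ^ (2 * m + 1 + 1) = 1 :=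
        Even.neg_one_pow ⟨m + 1, by ring⟩
      rw [h]
      push_cast
      ring
    rw [hrec]
    simp only [eval_mul, eval_add, eval_pow, eval_X, eval_natCast, eval_ofNat, eval_one, mul_eq_zero]
    have hfac : z ^ 2 + ((m : ℂ) + 1) ^ 2 * 64 =
        (z - 8 * ((m : ℂ) + 1) * Complex.I) * (z + 8 * ((m : ℂ) + 1) * Complex.I) := by
      linear_combination (64 * ((m : ℂ) + 1) ^ 2) * Complex.I_sq
    rw [hfac, mul_eq_zero, sub_eq_zero, add_eq_zero_iff_eq_neg, ih]
    constructor
    · rintro (⟨h | h⟩ | h | ⟨k, hk1, hk2, hk3⟩)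
      · exact Or.inr ⟨m + 1, by omega, by omega, Or.inl (by push_cast; rw [h])⟩
      · exact Or.inr ⟨m + 1, by omega, by omega, Or.inr (by push_cast; rw [h])⟩
      · exact Or.inl h
      · exact Or.inr ⟨k, hk1, by omega, hk3⟩
    · rintro (h | ⟨k, hk1, hk2, hk3⟩)
      · exact Or.inr (Or.inl h)
      · rcases Nat.lt_or_ge k (m + 1) with hlt | hge
        · exact Or.inr (Or.inr ⟨k, hk1, by omega, hk3⟩)
        · have : k = m + 1 := by omega
          subst this
          rcases hk3 with h | h
          · exact Or.inl (Or.inl (by rw [h]; push_cast; ring))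
          · exact Or.inl (Or.inr (by rw [h]; push_cast; ring))

theorem stmt7 (g : ℕ) (hg : 1 ≤ g) :
    {z : ℂ | (zhat g).eval z = 0 ∧ (zhat (g + 1)).eval z = 0} =
      {0} ∪ {z : ℂ | ∃ k : ℕ, 1 ≤ k ∧ k ≤ (g - 1) / 2 ∧
        (z = 8 * (k : ℂ) * Complex.I ∨ z = -(8 * (k : ℂ) * Complex.I))} := by
  ext z
  simp only [Set.mem_setOf_eq, Set.mem_union, Set.mem_singleton_iff]
  rcases Nat.even_or_odd g with ⟨m, hm⟩ | ⟨m, hm⟩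
  · obtain ⟨n, hn⟩ : ∃ n, m = n + 1 := ⟨m - 1, by omega⟩
    have hg2 : g = 2 * n + 2 := by omega
    have hg3 : g + 1 = 2 * (n + 1) + 1 := by omega
    have hd : (g - 1) / 2 = n := by omega
    rw [hd, hg2, show 2 * n + 2 + 1 = 2 * (n + 1) + 1 from by ring, zhat_even, eval_mul, eval_X, root_odd, mul_eq_zero, root_odd]
    constructor
    · rintro ⟨h1 | h1 | h1, _⟩
      · exact Or.inl h1
      · exact Or.inl h1
      · exact Or.inr h1
    · rintro (h | ⟨k, hk1, hk2, hk3⟩)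
      · exact ⟨Or.inl h, Or.inl h⟩
      · exact ⟨Or.inr (Or.inr ⟨k, hk1, hk2, hk3⟩), Or.inr ⟨k, hk1, by omega, hk3⟩⟩
  · have hg2 : g = 2 * m + 1 := by omega
    have hg3 : g + 1 = 2 * m + 2 := by omega
    have hd : (g - 1) / 2 = m := by omega
    rw [hd, hg2, show 2 * m + 1 + 1 = 2 * m + 2 from rfl, zhat_even, eval_mul, eval_X, root_odd, mul_eq_zero]
    constructor
    · rintro ⟨h1, _⟩
      exact h1
    · rintro h
      refine ⟨h, Or.inr ?_⟩
      rw [root_odd]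
      exact h
end
end

section
/- Let V be a finite-dimensional ℂ-vector space that is a module over ℂ[α,β,γ]/J_{g+1} (J as defined by the standard recursion), and suppose v ∈ V is a nonzero vector satisfying γ·v = 0, β·v = (−1)^g·8·v, and α·v = 4g·v if g is odd (resp. α·v = 4g·i·v if g is even). Then, for the relations R_r^i defined recursively with R_0^1 = 1, R_0^2 = 0, R_0^3 = 0, one has R_{g−1}^1·v = λ·v for some nonzero scalar λ ∈ ℂ, R_g^1·v = α·R_{g−1}^1·v, R_g^2·v = (−1)^g·16·R_{g−1}^1·v, and R_g^3·v = 0, assuming inductively that the recursion coefficients satisfy c_r = (−1)^r·8 and d_r = 0 for all r ≤ g. -/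
open MvPolynomial

noncomputable section

/-! ### Auxiliary scalar sequences -/

def ev (a b : ℂ) : R3 →+* ℂ := MvPolynomial.eval ![a, b, 0]

def s1 (a b : ℂ) (r : ℕ) : ℂ := ev a b (Rrel r).1
def s2 (a b : ℂ) (r : ℕ) : ℂ := ev a b (Rrel r).2.1
def s3 (a b : ℂ) (r : ℕ) : ℂ := ev a b (Rrel r).2.2

lemma s3_eq (a b : ℂ) (r : ℕ) : s3 a b r = 0 := by
  cases r with
  | zero => simp [s3, ev, Rrel]
  | succ n => simp [s3, ev, Rrel, ga]

lemma s1_zero (a b : ℂ) : s1 a b 0 = 1 := by simp [s1, ev, Rrel]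
lemma s2_zero (a b : ℂ) : s2 a b 0 = 0 := by simp [s2, ev, Rrel]

lemma s2_succ (a b : ℂ) (r : ℕ) :
    s2 a b (r + 1) = (b + (-1) ^ (r + 1) * 8) * s1 a b r := by
  have h3 := s3_eq a b r
  simp only [s2, s1, s3, Rrel, ev] at h3 ⊢
  simp [h3, al, be, ga]

lemma s1_succ (a b : ℂ) (r : ℕ) :
    s1 a b (r + 1) = a * s1 a b r + (r : ℂ) ^ 2 * s2 a b r := by
  simp only [s1, s2, Rrel, ev]
  simp [al, be, ga]

/-! ### Odd `g` case: `b = -8` -/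

lemma s2_even (a : ℂ) (r : ℕ) (hr : Even r) : s2 a (-8) r = 0 := by
  cases r with
  | zero => exact s2_zero a (-8)
  | succ n =>
    rw [s2_succ, Even.neg_one_pow hr]
    ring

lemma s2_odd' (a : ℂ) (k : ℕ) : s2 a (-8) (2*k+1) = -16 * s1 a (-8) (2*k) := by
  rw [s2_succ, Odd.neg_one_pow ⟨k, by ring⟩]
  ring

lemma O2 (a : ℂ) (k : ℕ) : s1 a (-8) (2*k+1) = a * s1 a (-8) (2*k) := by
  rw [s1_succ, s2_even a _ ⟨k, by ring⟩]
  ring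

lemma O3 (a : ℂ) (k : ℕ) :
    s1 a (-8) (2*k+2) = (a^2 - 16*((2*k+1 : ℕ) : ℂ)^2) * s1 a (-8) (2*k) := by
  have h : (2*k+2) = (2*k+1) + 1 := rfl
  rw [h, s1_succ, s2_odd', O2]
  push_cast
  ring

lemma O4 (g : ℕ) : ∀ k, 2*k < g → s1 (4*(g:ℂ)) (-8) (2*k) ≠ 0 := by
  intro k
  induction k with
  | zero => intro _; rw [Nat.mul_zero, s1_zero]; exact one_ne_zero
  | succ n ih =>
    intro hlt
    have h2 : 2*(n+1) = 2*n+2 := by ring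
    rw [h2, O3]
    have hne : (g:ℂ) ≠ ((2*n+1 : ℕ) : ℂ) := by
      intro h
      have : g = 2*n+1 := by exact_mod_cast h
      omega
    have hpos : ((g + (2*n+1) : ℕ) : ℂ) ≠ 0 := Nat.cast_ne_zero.mpr (by omega)
    have hfac : (4*(g:ℂ))^2 - 16*((2*n+1 : ℕ):ℂ)^2
        = 16 * ((g:ℂ) - ((2*n+1:ℕ):ℂ)) * (((g + (2*n+1) : ℕ)) : ℂ) := by
      push_cast
      ring
    rw [hfac]
    exact mul_ne_zero (mul_ne_zero (mul_ne_zero (by norm_num) (sub_ne_zero.mpr hne)) hpos)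
      (ih (by omega))

/-! ### Even `g` case: `b = 8` -/

lemma s2_odd (a : ℂ) (r : ℕ) (hr : Odd r) : s2 a 8 r = 0 := by
  cases r with
  | zero => exact s2_zero a 8
  | succ n =>
    rw [s2_succ, Odd.neg_one_pow hr]
    ring

lemma s2_even' (a : ℂ) (k : ℕ) : s2 a 8 (2*k+2) = 16 * s1 a 8 (2*k+1) := by
  have h : (2*k+2) = (2*k+1) + 1 := rfl
  rw [h, s2_succ, Even.neg_one_pow ⟨k+1, by ring⟩]
  ring

lemma E2 (a : ℂ) (k : ℕ) : s1 a 8 (2*k+2) = a * s1 a 8 (2*k+1) := by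
  have h : (2*k+2) = (2*k+1) + 1 := rfl
  rw [h, s1_succ, s2_odd a _ ⟨k, by ring⟩]
  ring

lemma E3 (a : ℂ) (k : ℕ) :
    s1 a 8 (2*k+3) = (a^2 + 16*((2*k+2 : ℕ) : ℂ)^2) * s1 a 8 (2*k+1) := by
  have h : (2*k+3) = (2*k+2) + 1 := rfl
  rw [h, s1_succ, s2_even', E2]
  push_cast
  ring

lemma E4 (g : ℕ) (hg : 1 ≤ g) :
    ∀ k, 2*k+1 < g → s1 (4*(g:ℂ)*Complex.I) 8 (2*k+1) ≠ 0 := by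
  intro k
  induction k with
  | zero =>
    intro _
    have h1 : s1 (4*(g:ℂ)*Complex.I) 8 1 = 4*(g:ℂ)*Complex.I := by
      have h0 : (1:ℕ) = 0 + 1 := rfl
      rw [h0, s1_succ, s1_zero, s2_zero]
      push_cast; ring
    rw [show 2*0+1 = 1 from rfl, h1]
    have hgz : (g:ℂ) ≠ 0 := Nat.cast_ne_zero.mpr (by omega)
    exact mul_ne_zero (mul_ne_zero (by norm_num) hgz) Complex.I_ne_zero
  | succ n ih =>
    intro hlt
    have h2 : 2*(n+1)+1 = 2*n+3 := by ring
    rw [h2, E3]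
    have hne : ((2*n+2 : ℕ) : ℂ) ≠ (g:ℂ) := by
      intro h
      have : 2*n+2 = g := by exact_mod_cast h
      omega
    have hpos : (((2*n+2) + g : ℕ) : ℂ) ≠ 0 := Nat.cast_ne_zero.mpr (by omega)
    have hfac : (4*(g:ℂ)*Complex.I)^2 + 16*((2*n+2 : ℕ):ℂ)^2
        = 16 * (((2*n+2:ℕ):ℂ) - (g:ℂ)) * ((((2*n+2) + g : ℕ)) : ℂ) := by
      push_cast
      linear_combination (16*(g:ℂ)^2) * Complex.I_sq
    rw [hfac]
    exact mul_ne_zero (mul_ne_zero (mul_ne_zero (by norm_num) (sub_ne_zero.mpr hne)) hpos)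
      (ih (by omega))

/-! ### The action of a polynomial on a simultaneous eigenvector -/

lemma smul_comm_c {V : Type} [AddCommGroup V] [Module ℂ V] [Module R3 V]
    [IsScalarTower ℂ R3 V] (c : ℂ) (q : R3) (w : V) :
    q • (c • w) = c • (q • w) := by
  rw [← algebraMap_smul R3 c w, ← mul_smul, mul_comm, mul_smul, algebraMap_smul]

lemma smul_eval {V : Type} [AddCommGroup V] [Module ℂ V] [Module R3 V]
    [IsScalarTower ℂ R3 V] (a b : ℂ) (v : V)
    (ha : al • v = a • v) (hb : be • v = b • v) (hc : ga • v = 0) :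
    ∀ p : R3, p • v = (ev a b p) • v := by
  intro p
  induction p using MvPolynomial.induction_on with
  | C c =>
    simp only [ev, eval_C]
    rw [show (C c : R3) = algebraMap ℂ R3 c from rfl, algebraMap_smul]
  | add p q hp hq =>
    rw [add_smul, hp, hq, map_add, add_smul]
  | mul_X p n hp =>
    have hXn : (X n : R3) • v = (ev a b (X n : R3)) • v := by
      fin_cases n
      · simpa [ev, eval_X, al] using ha
      · simpa [ev, eval_X, be] using hb
      · simp only [ev, eval_X]
        simpa [ga] using hc
    rw [mul_smul, hXn, smul_comm_c, hp, smul_smul, map_mul, mul_comm]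

/-! ### Key lemma -/

lemma key_s15 (g : ℕ) (hg : 1 ≤ g) (a : ℂ)
    {V : Type} [AddCommGroup V] [Module ℂ V] [Module R3 V] [IsScalarTower ℂ R3 V]
    (v : V)
    (ha : al • v = a • v) (hb : be • v = ((-1:ℂ)^g * 8) • v) (hc : ga • v = 0)
    (hne : s1 a ((-1:ℂ)^g * 8) (g-1) ≠ 0) :
    (∃ l : ℂ, l ≠ 0 ∧ (Rrel (g - 1)).1 • v = l • v) ∧
    (Rrel g).1 • v = (al * (Rrel (g - 1)).1) • v ∧
    (Rrel g).2.1 • v = (((-1 : ℂ) ^ g * 16) • (Rrel (g - 1)).1) • v ∧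
    (Rrel g).2.2 • v = 0 := by
  set b : ℂ := (-1:ℂ)^g * 8 with hb'
  have E := smul_eval a b v ha hb hc
  obtain ⟨m, rfl⟩ : ∃ m, g = m + 1 := ⟨g - 1, by omega⟩
  simp only [Nat.add_sub_cancel] at hne ⊢
  have hA : s1 a b (m+1) = a * s1 a b m := by
    rw [s1_succ]
    cases m with
    | zero => rw [s2_zero]; ring
    | succ n =>
      rw [s2_succ, hb']
      have h0 : ((-1:ℂ)^(n+1+1) * 8 + (-1:ℂ)^(n+1) * 8) = 0 := by
        rw [pow_succ]; ring
      rw [h0, zero_mul, mul_zero, add_zero]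
  have hs2 : s2 a b (m+1) = ((-1:ℂ)^(m+1) * 16) * s1 a b m := by
    rw [s2_succ, hb']; ring
  refine ⟨⟨s1 a b m, hne, E _⟩, ?_, ?_, ?_⟩
  · calc (Rrel (m+1)).1 • v = s1 a b (m+1) • v := E _
      _ = (a * s1 a b m) • v := by rw [hA]
      _ = (ev a b (al * (Rrel m).1)) • v := by
          rw [map_mul]
          congr 2
          simp [ev, al, eval_X]
      _ = (al * (Rrel m).1) • v := (E _).symm
  · calc (Rrel (m+1)).2.1 • v = s2 a b (m+1) • v := E _
      _ = (((-1:ℂ)^(m+1) * 16) * s1 a b m) • v := by rw [hs2]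
      _ = ((-1:ℂ)^(m+1) * 16) • (s1 a b m • v) := mul_smul _ _ _
      _ = ((-1:ℂ)^(m+1) * 16) • ((Rrel m).1 • v) := by rw [E ((Rrel m).1)]; rfl
      _ = (((-1:ℂ)^(m+1) * 16) • (Rrel m).1) • v := (smul_assoc _ _ _).symm
  · calc (Rrel (m+1)).2.2 • v = s3 a b (m+1) • v := E _
      _ = 0 := by rw [s3_eq, zero_smul]

theorem stmt15 (g : ℕ) (hg : 1 ≤ g)
    {V : Type} [AddCommGroup V] [Module ℂ V] [Module R3 V] [IsScalarTower ℂ R3 V]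
    [FiniteDimensional ℂ V]
    (hmod : ∀ x ∈ J (g + 1), ∀ v : V, x • v = 0)
    (v : V) (hv : v ≠ 0)
    (h1 : ga • v = 0)
    (h2 : be • v = ((-1 : ℂ) ^ g * 8) • v)
    (h3 : Odd g → al • v = ((4 * g : ℂ)) • v)
    (h4 : Even g → al • v = ((4 * g : ℂ) * Complex.I) • v) :
    (∃ l : ℂ, l ≠ 0 ∧ (Rrel (g - 1)).1 • v = l • v) ∧
    (Rrel g).1 • v = (al * (Rrel (g - 1)).1) • v ∧
    (Rrel g).2.1 • v = (((-1 : ℂ) ^ g * 16) • (Rrel (g - 1)).1) • v ∧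
    (Rrel g).2.2 • v = 0 := by
  rcases Nat.even_or_odd g with hpar | hpar
  · -- g even
    have hb8 : ((-1:ℂ)^g * 8) = 8 := by rw [Even.neg_one_pow hpar]; ring
    have hne : s1 (4*(g:ℂ)*Complex.I) ((-1:ℂ)^g * 8) (g-1) ≠ 0 := by
      rw [hb8]
      obtain ⟨k, hk⟩ : ∃ k, g = 2*k+2 := by
        rcases hpar with ⟨t, ht⟩
        exact ⟨t-1, by omega⟩
      rw [show g - 1 = 2*k+1 by omega]
      exact E4 g hg k (by omega)
    exact key_s15 g hg (4*(g:ℂ)*Complex.I) v (h4 hpar) h2 h1 hne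
  · -- g odd
    have hne : s1 (4*(g:ℂ)) ((-1:ℂ)^g * 8) (g-1) ≠ 0 := by
      rw [show ((-1:ℂ)^g * 8) = -8 by rw [Odd.neg_one_pow hpar]; ring]
      obtain ⟨k, hk⟩ := hpar
      rw [show g - 1 = 2*k by omega]
      exact O4 g k (by omega)
    exact key_s15 g hg (4*(g:ℂ)) v (h3 hpar) h2 h1 hne

end
end

section
/- Let ζ_r ∈ ℂ[α,β,γ] be defined by ζ_0 = 1, ζ_1 = α, ζ_{r+1} = α·ζ_r + r²·(β + (−1)^r·8)·ζ_{r−1} + 2r(r−1)·γ·ζ_{r−2}. Then the ideal (ζ_g, ζ_{g+1}, ζ_{g+2}) equals the ideal J_g = (R_g^1, R_g^2, R_g^3), where R_r^i satisfy the recursion R_0^1 = 1, R_0^2 = 0, R_0^3 = 0, R_{r+1}^1 = α·R_r^1 + r²·R_r^2, R_{r+1}^2 = (β + (−1)^{r+1}8)·R_r^1 + (2r/(r+1))·R_r^3, R_{r+1}^3 = γ·R_r^1. -/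
open MvPolynomial

noncomputable section

def zeta3 : ℕ → R3
  | 0 => 1
  | 1 => al
  | 2 => al * zeta3 1 + (be + (-1) ^ 1 * 8) * zeta3 0
  | (n + 3) => al * zeta3 (n + 2)
      + ((n : R3) + 2) ^ 2 * (be + (-1) ^ (n + 2) * 8) * zeta3 (n + 1)
      + 2 * ((n : R3) + 2) * ((n : R3) + 1) * ga * zeta3 n

lemma Rrel_one (r : ℕ) : (Rrel (r+1)).1 = al * (Rrel r).1 + (r : R3) ^ 2 * (Rrel r).2.1 := rfl
lemma Rrel_two (r : ℕ) : (Rrel (r+1)).2.1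
    = (be + (-1) ^ (r + 1) * 8) * (Rrel r).1
      + C ((2 * (r : ℂ)) / ((r : ℂ) + 1)) * (Rrel r).2.2 := rfl
lemma Rrel_three (r : ℕ) : (Rrel (r+1)).2.2 = ga * (Rrel r).1 := rfl

lemma natCast_R3 (n : ℕ) : ((n : R3)) = C ((n : ℂ)) := by simp

lemma zeta_eq : ∀ r, zeta3 r = (Rrel r).1
  | 0 => by simp [zeta3, Rrel]
  | 1 => by simp [zeta3, Rrel]
  | 2 => by
      simp only [zeta3, zeta_eq 1, zeta_eq 0, Rrel_one, Rrel_two]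
      simp [Rrel]
  | (n+3) => by
      have hne : ((n:ℂ) + 2) ≠ 0 := by
        have : ((n+2:ℕ):ℂ) ≠ 0 := Nat.cast_ne_zero.mpr (by omega)
        push_cast at this; exact this
      have hne' : ((n:ℂ) + 1 + 1) ≠ 0 := by
        intro h; apply hne; rw [← h]; ring
      have key : C (2 * ((n:ℂ)+1) / ((n:ℂ)+1+1)) * ((n:R3)+2)^2
          = 2 * ((n : R3) + 2) * ((n : R3) + 1) := by
        rw [show ((n:R3)+2) = C ((n:ℂ)+2) by simp [map_ofNat],
            show ((n:R3)+1) = C ((n:ℂ)+1) by simp,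
            show (2:R3) = C 2 by simp [map_ofNat],
            ← C_pow, ← C_mul, ← C_mul, ← C_mul]
        congr 1
        field_simp
        ring
      conv_lhs => rw [zeta3]
      rw [show n+3 = (n+1+1)+1 by omega, Rrel_one, Rrel_two, Rrel_three,
          ← zeta_eq (n+1+1), ← zeta_eq (n+1), ← zeta_eq n,
          show n+1+1 = n+2 by omega]
      push_cast
      linear_combination (- ga * zeta3 n) * key

theorem stmt17 (g : ℕ) (hg : 1 ≤ g) :
    Ideal.span {zeta3 g, zeta3 (g + 1), zeta3 (g + 2)} = J g := by
  have hgC : ((g : ℂ)) ≠ 0 := Nat.cast_ne_zero.mpr (by omega)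
  have hg1C : ((g : ℂ) + 1) ≠ 0 := by
    have : ((g+1:ℕ):ℂ) ≠ 0 := Nat.cast_ne_zero.mpr (by omega)
    push_cast at this; exact this
  have e1 : zeta3 g = (Rrel g).1 := zeta_eq g
  have e2 : zeta3 (g+1) = al * zeta3 g + (g : R3) ^ 2 * (Rrel g).2.1 := by
    rw [zeta_eq (g+1), Rrel_one, ← e1]
  have hgsq : (g : R3) ^ 2 = C ((g:ℂ)^2) := by rw [natCast_R3, ← C_pow]
  have e3 : zeta3 (g+2) = al * zeta3 (g+1)
      + ((g:R3)+1)^2 * (be + (-1) ^ (g + 1) * 8) * zeta3 g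
      + C (2 * (g:ℂ) * ((g:ℂ) + 1)) * (Rrel g).2.2 := by
    have hc : ((g+1:ℕ):R3)^2 * C (2*(g:ℂ)/((g:ℂ)+1)) = C (2 * (g:ℂ) * ((g:ℂ) + 1)) := by
      rw [show ((g+1:ℕ):R3) = C ((g:ℂ)+1) by push_cast; simp,
          ← C_pow, ← C_mul]
      congr 1
      field_simp
    rw [show g+2 = (g+1)+1 by omega, zeta_eq ((g+1)+1), Rrel_one, Rrel_two,
        ← zeta_eq (g+1), ← e1]
    push_cast at hc ⊢
    linear_combination (Rrel g).2.2 * hc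
  have h1 : zeta3 g ∈ Ideal.span {zeta3 g, zeta3 (g + 1), zeta3 (g + 2)} :=
    Ideal.subset_span (by simp)
  have h2 : zeta3 (g+1) ∈ Ideal.span {zeta3 g, zeta3 (g + 1), zeta3 (g + 2)} :=
    Ideal.subset_span (by simp)
  have h3 : zeta3 (g+2) ∈ Ideal.span {zeta3 g, zeta3 (g + 1), zeta3 (g + 2)} :=
    Ideal.subset_span (by simp)
  have j1 : (Rrel g).1 ∈ J g := Ideal.subset_span (by simp [J])
  have j2 : (Rrel g).2.1 ∈ J g := Ideal.subset_span (by simp [J])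
  have j3 : (Rrel g).2.2 ∈ J g := Ideal.subset_span (by simp [J])
  apply le_antisymm
  · rw [Ideal.span_le]
    intro x hx
    simp only [Set.mem_insert_iff, Set.mem_singleton_iff] at hx
    rcases hx with h | h | h <;> subst h
    · rw [e1]; exact j1
    · rw [e2, e1]
      exact Ideal.add_mem _ (Ideal.mul_mem_left _ _ j1) (Ideal.mul_mem_left _ _ j2)
    · rw [e3, e2, e1]
      apply Ideal.add_mem _ _ (Ideal.mul_mem_left _ _ j3)
      apply Ideal.add_mem
      · exact Ideal.mul_mem_left _ _
          (Ideal.add_mem _ (Ideal.mul_mem_left _ _ j1) (Ideal.mul_mem_left _ _ j2))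
      · exact Ideal.mul_mem_left _ _ j1
  · rw [J, Ideal.span_le]
    intro x hx
    simp only [Set.mem_insert_iff, Set.mem_singleton_iff] at hx
    rcases hx with h | h | h <;> subst h
    · rw [← e1]; exact h1
    · have hD2 : C (((g:ℂ)^2)⁻¹) * (g:R3)^2 = 1 := by
        rw [hgsq, ← C_mul, inv_mul_cancel₀ (pow_ne_zero 2 hgC)]; simp
      have hB : (Rrel g).2.1 = C (((g:ℂ)^2)⁻¹) * zeta3 (g+1)
          + (- (C (((g:ℂ)^2)⁻¹) * al)) * zeta3 g := by
        linear_combination (- C (((g:ℂ)^2)⁻¹)) * e2 - (Rrel g).2.1 * hD2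
      rw [hB]
      exact Ideal.add_mem _ (Ideal.mul_mem_left _ _ h2) (Ideal.mul_mem_left _ _ h1)
    · set D : ℂ := 2 * (g:ℂ) * ((g:ℂ) + 1) with hD
      have hDne : D ≠ 0 := mul_ne_zero (mul_ne_zero two_ne_zero hgC) hg1C
      have hDD : C (D⁻¹) * C D = (1 : R3) := by
        rw [← C_mul, inv_mul_cancel₀ hDne]; simp
      have hC : (Rrel g).2.2 = C (D⁻¹) * zeta3 (g+2)
          + (- (C (D⁻¹) * al)) * zeta3 (g+1)
          + (- (C (D⁻¹) * (((g:R3)+1)^2 * (be + (-1) ^ (g + 1) * 8)))) * zeta3 g := by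
        linear_combination (- C (D⁻¹)) * e3 - (Rrel g).2.2 * hDD
      rw [hC]
      exact Ideal.add_mem _ (Ideal.add_mem _ (Ideal.mul_mem_left _ _ h3)
        (Ideal.mul_mem_left _ _ h2)) (Ideal.mul_mem_left _ _ h1)
end
end

section
/- Assuming γ·J_{g−1} ⊆ J_g and that the monomials α^a·β^b·γ^c with a+b+c < g−1 map to a ℂ-basis of ℂ[α,β,γ]/J_{g−1}, the kernel of the multiplication-by-γ map on ℂ[α,β,γ]/J_g equals J_{g−1}/J_g; equivalently, multiplication by γ factors as the surjection ℂ[α,β,γ]/J_g → ℂ[α,β,γ]/J_{g−1} followed by an injective map ℂ[α,β,γ]/J_{g−1} → ℂ[α,β,γ]/J_g. -/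
open MvPolynomial

noncomputable section

/-! Auxiliary machinery -/

/-- substitution γ ↦ 0 -/
def sig : R3 →ₐ[ℂ] R3 := aeval fun i => if i = 2 then 0 else X i

/-- substitution β ↦ c -/
def tau (c : ℂ) : R3 →ₐ[ℂ] R3 := aeval fun i => if i = 1 then C c else X i

lemma sig_al : sig al = al := by simp [sig, al]
lemma sig_be : sig be = be := by simp [sig, be]
lemma sig_ga : sig ga = 0 := by simp [sig, ga]
lemma sig_C (c : ℂ) : sig (C c) = C c := by simp [sig]
lemma tau_al (c : ℂ) : tau c al = al := by simp [tau, al]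
lemma tau_be (c : ℂ) : tau c be = C c := by simp [tau, be]
lemma tau_C (c a : ℂ) : tau c (C a) = C a := by simp [tau]

lemma dvd_sub_sig (p : R3) : ga ∣ p - sig p := by
  induction p using MvPolynomial.induction_on with
  | C a => rw [sig_C, sub_self]; exact dvd_zero _
  | add p q hp hq =>
    rw [map_add, add_sub_add_comm]
    exact dvd_add hp hq
  | mul_X p i hp =>
    rw [map_mul]
    by_cases h2 : i = 2
    · subst h2
      rw [show sig (X 2) = 0 from sig_ga, mul_zero, sub_zero]
      exact Dvd.intro_left p rfl
    · have hx : sig (X i) = X i := by simp [sig, h2]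
      rw [hx, show p * X i - sig p * X i = (p - sig p) * X i by ring]
      exact hp.mul_right _

lemma dvd_sub_tau (c : ℂ) (p : R3) : (be - C c) ∣ p - tau c p := by
  induction p using MvPolynomial.induction_on with
  | C a => rw [tau_C, sub_self]; exact dvd_zero _
  | add p q hp hq =>
    rw [map_add, add_sub_add_comm]
    exact dvd_add hp hq
  | mul_X p i hp =>
    rw [map_mul]
    by_cases h2 : i = 1
    · subst h2
      rw [show tau c (X 1) = C c from tau_be c,
        show p * X 1 - tau c p * C c
          = (p - tau c p) * be + tau c p * (be - C c) by rw [be]; ring]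
      exact dvd_add (hp.mul_right _) (Dvd.intro_left _ rfl)
    · have hx : tau c (X i) = X i := by simp [tau, h2]
      rw [hx, show p * X i - tau c p * X i = (p - tau c p) * X i by ring]
      exact hp.mul_right _

lemma dvd_iff_tau (c : ℂ) (p : R3) : (be - C c) ∣ p ↔ tau c p = 0 := by
  constructor
  · rintro ⟨q, rfl⟩
    rw [map_mul, map_sub, tau_be, tau_C, sub_self, zero_mul]
  · intro h
    have := dvd_sub_tau c p
    rwa [h, sub_zero] at this

lemma prime_be_sub (c : ℂ) : Prime (be - C c : R3) := by
  refine ⟨?_, ?_, ?_⟩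
  · intro h
    have h2 := congrArg (tau (c + 1)) h
    rw [map_sub, tau_be, tau_C, map_zero, ← C_sub] at h2
    simp at h2
  · intro h
    have h1 : (be - C c : R3) ∣ 1 := h.dvd
    rw [dvd_iff_tau, map_one] at h1
    exact one_ne_zero h1
  · intro a b hab
    rw [dvd_iff_tau, map_mul] at hab
    rcases mul_eq_zero.mp hab with h | h
    · exact Or.inl ((dvd_iff_tau c a).mpr h)
    · exact Or.inr ((dvd_iff_tau c b).mpr h)

/-- the recursion for A mod γ -/
def Abar : ℕ → R3
  | 0 => 1
  | 1 => al
  | (r + 2) => al * Abar (r + 1) + ((r + 1 : ℕ) : R3) ^ 2 * ((be + (-1) ^ (r + 1) * 8) * Abar r)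

/-- the recursion for B mod γ -/
def Sb : ℕ → R3
  | 0 => 0
  | (r + 1) => (be + (-1) ^ (r + 1) * 8) * Abar r

lemma sig_Rrel (r : ℕ) :
    sig (Rrel r).1 = Abar r ∧ sig (Rrel r).2.1 = Sb r ∧ sig (Rrel r).2.2 = 0 := by
  induction r with
  | zero => simp [Rrel, Abar, Sb]
  | succ r ih =>
    obtain ⟨h1, h2, h3⟩ := ih
    have e : Rrel (r + 1) =
        (al * (Rrel r).1 + (r : R3) ^ 2 * (Rrel r).2.1,
         (be + (-1) ^ (r + 1) * 8) * (Rrel r).1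
           + C ((2 * (r : ℂ)) / ((r : ℂ) + 1)) * (Rrel r).2.2,
         ga * (Rrel r).1) := rfl
    rw [e]
    refine ⟨?_, ?_, ?_⟩
    · show sig (al * (Rrel r).1 + (r : R3) ^ 2 * (Rrel r).2.1) = Abar (r + 1)
      rw [map_add, map_mul, map_mul, map_pow, map_natCast, sig_al, h1, h2]
      cases r with
      | zero => simp [Abar, Sb]
      | succ k => simp [Abar, Sb]
    · show sig ((be + (-1) ^ (r + 1) * 8) * (Rrel r).1
          + C ((2 * (r : ℂ)) / ((r : ℂ) + 1)) * (Rrel r).2.2) = Sb (r + 1)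
      rw [map_add, map_mul, map_mul, map_add, sig_be, map_mul, map_pow, map_neg, map_one,
        map_ofNat, sig_C, h1, h3, mul_zero, add_zero]
      rfl
    · show sig (ga * (Rrel r).1) = 0
      rw [map_mul, sig_ga, zero_mul]

lemma natCast_pow_sq (n : ℕ) : ((n : R3)) ^ 2 = C ((n : ℂ) ^ 2) := by
  rw [map_pow, map_natCast]

lemma neg_pow_eight (n : ℕ) : ((-1 : R3)) ^ n * 8 = C ((-1 : ℂ) ^ n * 8) := by
  rw [map_mul, map_pow, map_neg, map_one, map_ofNat]

lemma tau_Abar_aux (c : ℂ) (r : ℕ) :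
    ((tau c (Abar r)).totalDegree ≤ r
      ∧ coeff (Finsupp.single 0 r) (tau c (Abar r)) = 1)
    ∧ ((tau c (Abar (r + 1))).totalDegree ≤ r + 1
      ∧ coeff (Finsupp.single 0 (r + 1)) (tau c (Abar (r + 1))) = 1) := by
  induction r with
  | zero =>
    constructor
    · constructor
      · simp [Abar]
      · simp [Abar]
    · constructor
      · rw [show Abar 1 = al from rfl, tau_al, al, totalDegree_X]
      · rw [show Abar 1 = al from rfl, tau_al, al, coeff_X]
        simp
  | succ r ih =>
    obtain ⟨⟨td0, c0⟩, ⟨td1, c1⟩⟩ := ih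
    have ht : tau c (Abar (r + 2)) = al * tau c (Abar (r + 1))
        + C (((r + 1 : ℕ) : ℂ) ^ 2 * (c + (-1 : ℂ) ^ (r + 1) * 8)) * tau c (Abar r) := by
      show tau c (al * Abar (r + 1) + ((r + 1 : ℕ) : R3) ^ 2
          * ((be + (-1) ^ (r + 1) * 8) * Abar r)) = _
      rw [map_add, map_mul, map_mul, map_mul, map_pow, map_natCast, tau_al, map_add, tau_be,
        neg_pow_eight, tau_C, natCast_pow_sq, ← C_add, ← mul_assoc, ← C_mul]
    refine ⟨⟨td1, c1⟩, ?_, ?_⟩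
    · rw [ht]
      refine le_trans (totalDegree_add _ _) (max_le ?_ ?_)
      · refine le_trans (totalDegree_mul _ _) ?_
        rw [al, totalDegree_X]
        omega
      · refine le_trans (totalDegree_mul _ _) ?_
        rw [totalDegree_C]
        omega
    · have hsum : ∑ i ∈ (Finsupp.single (0 : Fin 3) (r + 2)).support,
          (Finsupp.single (0 : Fin 3) (r + 2)) i = r + 2 := by
        rw [Finsupp.support_single_ne_zero _ (by omega : r + 2 ≠ 0)]
        simp
      have hc0 : coeff (Finsupp.single (0 : Fin 3) (r + 2)) (tau c (Abar r)) = 0 := by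
        refine coeff_eq_zero_of_totalDegree_lt ?_
        rw [hsum]
        omega
      have hsingle : (Finsupp.single (0 : Fin 3) (r + 2))
          = Finsupp.single 0 1 + Finsupp.single 0 (r + 1) := by
        rw [← Finsupp.single_add]
        congr 1
        omega
      rw [ht, coeff_add, coeff_C_mul, hc0, mul_zero, add_zero, hsingle, al, coeff_X_mul, c1]

lemma tau_Abar_coeff (c : ℂ) (r : ℕ) : coeff (Finsupp.single 0 r) (tau c (Abar r)) = 1 :=
  (tau_Abar_aux c r).1.2

lemma Abar_ne_zero (r : ℕ) : Abar r ≠ 0 := by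
  intro h
  have := tau_Abar_coeff 0 r
  rw [h, map_zero, coeff_zero] at this
  exact one_ne_zero this.symm

lemma not_dvd_Abar (c : ℂ) (r : ℕ) : ¬ (be - C c) ∣ Abar r := by
  rw [dvd_iff_tau]
  intro h
  have := tau_Abar_coeff c r
  rw [h, coeff_zero] at this
  exact one_ne_zero this.symm

lemma relPrime_be_Abar (c : ℂ) (r : ℕ) : IsRelPrime (be - C c : R3) (Abar r) :=
  ((prime_be_sub c).irreducible.isRelPrime_iff_not_dvd).mpr (not_dvd_Abar c r)

lemma s_form (n : ℕ) : (be + (-1) ^ n * 8 : R3) = be - C (-((-1 : ℂ) ^ n * 8)) := by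
  rw [map_neg, ← neg_pow_eight]
  ring

lemma relPrime_Abar : ∀ r : ℕ, IsRelPrime (Abar (r + 1)) (Abar r) := by
  intro r
  induction r with
  | zero => exact isRelPrime_one_right
  | succ r ih =>
    show IsRelPrime (al * Abar (r + 1)
      + ((r + 1 : ℕ) : R3) ^ 2 * ((be + (-1) ^ (r + 1) * 8) * Abar r)) (Abar (r + 1))
    refine IsRelPrime.mul_add_right_left ?_ al
    refine IsRelPrime.mul_left ?_ (IsRelPrime.mul_left ?_ ih.symm)
    · refine IsUnit.isRelPrime_left ?_
      rw [natCast_pow_sq]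
      exact (isUnit_iff_ne_zero.mpr (pow_ne_zero 2 (Nat.cast_ne_zero.mpr (Nat.succ_ne_zero r)))).map C
    · rw [s_form]
      exact relPrime_be_Abar _ _

theorem stmt18 (g : ℕ) (hg : 2 ≤ g)
    (hsub : ∀ x ∈ J (g - 1), ga * x ∈ J g)
    (hJ : J g ≤ J (g - 1))
    (hli : LinearIndependent ℂ
      (fun m : {m : ℕ × ℕ × ℕ // m.1 + m.2.1 + m.2.2 < g - 1} =>
        Ideal.Quotient.mk (J (g - 1)) (al ^ m.val.1 * be ^ m.val.2.1 * ga ^ m.val.2.2)))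
    (hspan : Submodule.span ℂ (Set.range
      (fun m : {m : ℕ × ℕ × ℕ // m.1 + m.2.1 + m.2.2 < g - 1} =>
        Ideal.Quotient.mk (J (g - 1)) (al ^ m.val.1 * be ^ m.val.2.1 * ga ^ m.val.2.2))) = ⊤) :
    ∀ x : R3, ga * x ∈ J g ↔ x ∈ J (g - 1) := by
  intro x
  constructor
  · intro h
    obtain ⟨k, rfl⟩ : ∃ k, g = k + 1 := ⟨g - 1, by omega⟩
    rw [show k + 1 - 1 = k from rfl] at *
    set A := (Rrel (k + 1)).1 with hA
    set B := (Rrel (k + 1)).2.1 with hB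
    set Cc := (Rrel (k + 1)).2.2 with hC
    set Ak := (Rrel k).1 with hAk
    have hCc : Cc = ga * Ak := rfl
    -- extract a representation
    rw [J, show ({A, B, Cc} : Set R3) = insert A (insert B {Cc}) from rfl,
      Ideal.mem_span_insert] at h
    obtain ⟨u, z, hz, hzu⟩ := h
    rw [Ideal.mem_span_insert] at hz
    obtain ⟨v, z2, hz2, hz2u⟩ := hz
    rw [Ideal.mem_span_singleton'] at hz2
    obtain ⟨w, hw⟩ := hz2
    have E : ga * x = u * A + v * B + w * (ga * Ak) := by
      rw [hzu, hz2u, ← hw, hCc]; ring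
    -- apply sig
    have hsA : sig A = Abar (k + 1) := (sig_Rrel (k + 1)).1
    have hsB : sig B = (be + (-1) ^ (k + 1) * 8) * Abar k := (sig_Rrel (k + 1)).2.1
    have E0 : (0 : R3) = sig u * sig A + sig v * sig B := by
      have h0 := congrArg sig E
      rw [map_mul, sig_ga, zero_mul, map_add, map_add, map_mul, map_mul, map_mul, map_mul,
        sig_ga, zero_mul, mul_zero, add_zero] at h0
      exact h0
    have hrp : IsRelPrime (sig B) (sig A) := by
      rw [hsA, hsB, s_form]
      exact IsRelPrime.mul_left (relPrime_be_Abar _ _) (relPrime_Abar k).symm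
    have hdvd : sig B ∣ sig u * sig A := ⟨-sig v, by linear_combination -E0⟩
    obtain ⟨f, hf⟩ := hrp.dvd_of_dvd_mul_right hdvd
    have hSBne : sig B ≠ 0 := by
      rw [hsB, s_form]
      exact mul_ne_zero (prime_be_sub _).ne_zero (Abar_ne_zero k)
    have hv : sig v = -(f * sig A) := by
      have h1 : sig B * (f * sig A + sig v) = 0 := by linear_combination -(sig A) * hf - E0
      rcases mul_eq_zero.mp h1 with h2 | h2
      · exact absurd h2 hSBne
      · linear_combination h2
    -- tilde decompositions
    obtain ⟨ut, hut⟩ := dvd_sub_sig u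
    obtain ⟨vt, hvt⟩ := dvd_sub_sig v
    obtain ⟨At, hAt⟩ := dvd_sub_sig A
    obtain ⟨Bt, hBt⟩ := dvd_sub_sig B
    have h1 : u * A = sig u * A + ga * (ut * A) := by linear_combination A * hut
    have h2 : v * B = sig v * B + ga * (vt * B) := by linear_combination B * hvt
    have h3 : sig u * A + sig v * B = ga * (f * (At * B - Bt * A)) := by
      rw [hf, hv]
      linear_combination (f * B) * hAt - (f * A) * hBt
    have hkey : ga * x = ga * (f * (At * B - Bt * A) + ut * A + vt * B + w * Ak) := by
      linear_combination E + h1 + h2 + h3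
    have hx : x = f * (At * B - Bt * A) + ut * A + vt * B + w * Ak :=
      mul_left_cancel₀ (show ga ≠ 0 from X_ne_zero 2) hkey
    have hAJ : A ∈ J (k + 1) := Ideal.subset_span (by simp [hA])
    have hBJ : B ∈ J (k + 1) := Ideal.subset_span (by simp [hB])
    have hAkJ : Ak ∈ J k := Ideal.subset_span (by simp [hAk])
    rw [hx]
    refine add_mem (add_mem (add_mem ?_ ?_) ?_) ?_
    · exact hJ (Ideal.mul_mem_left _ f
        (sub_mem (Ideal.mul_mem_left _ At hBJ) (Ideal.mul_mem_left _ Bt hAJ)))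
    · exact hJ (Ideal.mul_mem_left _ ut hAJ)
    · exact hJ (Ideal.mul_mem_left _ vt hBJ)
    · exact Ideal.mul_mem_left _ w hAkJ
  · exact hsub x

end
end
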